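/- Let F : ℝ → ℂ be twice continuously differentiable with F′(0) = 0. Then for every λ > 0 and all x, y ∈ ℝ one has F(λ|x−y|) = F(λ|x|) − λ·y·sgn(x)·F′(λ|x|) + λ²·y²·∫₀¹ (1−θ)·F″(λ|x−θy|) dθ. -/

import Mathlib

open MeasureTheory

/-- Lemma 3.4 (ii): second-order Taylor-type expansion of `F (λ|x-y|)` when `F'(0) = 0`. -/
theorem stmt1 (F : ℝ → ℂ) (hF : ContDiff ℝ 2 F) (hF'0 : deriv F 0 = 0)
    (l : ℝ) (hl : 0 < l) (x y : ℝ) :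
    F (l * |x - y|) = F (l * |x|)
      - (l : ℂ) * (y : ℂ) * (Real.sign x : ℂ) * deriv F (l * |x|)
      + (l : ℂ) ^ 2 * (y : ℂ) ^ 2 *
        ∫ θ in (0:ℝ)..1, ((1 - θ : ℝ) : ℂ) * deriv (deriv F) (l * |x - θ * y|) := by
  -- regularity facts
  have hF11 : ContDiff ℝ (1 + 1 : WithTop ℕ∞) F := by norm_num; exact hF
  have hF1 : Differentiable ℝ F := (contDiff_succ_iff_deriv.mp hF11).1
  have hFd : ContDiff ℝ 1 (deriv F) := (contDiff_succ_iff_deriv.mp hF11).2.2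
  have hFd1 : Differentiable ℝ (deriv F) := (contDiff_one_iff_deriv.mp hFd).1
  have hFd2c : Continuous (deriv (deriv F)) := (contDiff_one_iff_deriv.mp hFd).2
  have hsma : ∀ h : ℝ, Real.sign h * |h| = h := by
    intro h
    rcases lt_trichotomy h 0 with hh | hh | hh
    · simp [Real.sign_of_neg hh, abs_of_neg hh]
    · simp [hh]
    · simp [Real.sign_of_pos hh, abs_of_pos hh]
  set G : ℝ → ℂ := fun u => F (l * |u|) with hG
  set G1 : ℝ → ℂ := fun u => (l : ℂ) * (Real.sign u : ℂ) * deriv F (l * |u|) with hG1def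
  set G2 : ℝ → ℂ := fun u => (l : ℂ) ^ 2 * deriv (deriv F) (l * |u|) with hG2def
  -- derivative of G
  have hA : ∀ u : ℝ, HasDerivAt G (G1 u) u := by
    intro u
    rcases lt_trichotomy u 0 with hu | hu | hu
    · have hi : HasDerivAt (fun v : ℝ => l * -v) (-l) u := by
        simpa using ((hasDerivAt_id u).neg.const_mul l)
      have h1 : HasDerivAt (fun v : ℝ => F (l * -v)) ((-l) • deriv F (l * -u)) u :=
        (hF1 (l * -u)).hasDerivAt.scomp u hi
      have heq : G =ᶠ[nhds u] fun v : ℝ => F (l * -v) := by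
        filter_upwards [Iio_mem_nhds hu] with v hv
        have hv' : v < 0 := hv
        simp [hG, abs_of_neg hv', mul_neg]
      have h2 := h1.congr_of_eventuallyEq heq
      refine HasDerivAt.congr_deriv h2 (Eq.symm ?_)
      simp only [hG1def, Complex.real_smul]
      rw [Real.sign_of_neg hu, abs_of_neg hu]
      push_cast
      ring
    · have hi : HasDerivAt (fun t : ℝ => l * t) l 0 := by
        simpa using ((hasDerivAt_id (0:ℝ)).const_mul l)
      have h0 : HasDerivAt (fun t : ℝ => F (l * t)) (0 : ℂ) 0 := by
        have := (hF1 (l * 0)).hasDerivAt.scomp 0 hi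
        simpa [mul_zero, hF'0, Function.comp_def] using this
      rw [hasDerivAt_iff_isLittleO] at h0
      simp only [mul_zero, sub_zero, smul_zero] at h0
      have habs : Filter.Tendsto (fun h : ℝ => |h|) (nhds 0) (nhds 0) := by
        simpa using continuous_abs.tendsto (0 : ℝ)
      have h1 := h0.comp_tendsto habs
      have h2 : (fun h : ℝ => |h|) =O[nhds (0:ℝ)] fun h => h := by
        apply Asymptotics.isBigO_of_le
        intro z
        simp
      have h3 := h1.trans_isBigO h2
      subst hu
      have : HasDerivAt G (0 : ℂ) 0 := by
        rw [hasDerivAt_iff_isLittleO]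
        simp only [sub_zero, smul_zero]
        simpa [hG, Function.comp_def, abs_zero, mul_zero] using h3
      convert this using 1
      simp [hG1def]
    · have hi : HasDerivAt (fun v : ℝ => l * v) l u := by
        simpa using ((hasDerivAt_id u).const_mul l)
      have h1 : HasDerivAt (fun v : ℝ => F (l * v)) (l • deriv F (l * u)) u :=
        (hF1 (l * u)).hasDerivAt.scomp u hi
      have heq : G =ᶠ[nhds u] fun v : ℝ => F (l * v) := by
        filter_upwards [Ioi_mem_nhds hu] with v hv
        have hv' : (0:ℝ) < v := hv
        simp [hG, abs_of_pos hv']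
      have h2 := h1.congr_of_eventuallyEq heq
      refine HasDerivAt.congr_deriv h2 (Eq.symm ?_)
      simp [hG1def, Real.sign_of_pos hu, abs_of_pos hu, Complex.real_smul]
  -- derivative of G1
  have hB : ∀ u : ℝ, HasDerivAt G1 (G2 u) u := by
    intro u
    rcases lt_trichotomy u 0 with hu | hu | hu
    · have hi : HasDerivAt (fun v : ℝ => l * -v) (-l) u := by
        simpa using ((hasDerivAt_id u).neg.const_mul l)
      have h1 : HasDerivAt (fun v : ℝ => deriv F (l * -v)) ((-l) • deriv (deriv F) (l * -u)) u :=
        by have := (hFd1 (l * -u)).hasDerivAt.scomp u hi; exact this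
      have h1' := h1.const_mul (-(l:ℂ))
      have heq : G1 =ᶠ[nhds u] fun v : ℝ => -(l:ℂ) * deriv F (l * -v) := by
        filter_upwards [Iio_mem_nhds hu] with v hv
        have hv' : v < 0 := hv
        simp only [hG1def]
        rw [Real.sign_of_neg hv', abs_of_neg hv']
        push_cast
        ring_nf
      have h2 := h1'.congr_of_eventuallyEq heq
      refine HasDerivAt.congr_deriv h2 (Eq.symm ?_)
      simp [hG2def, abs_of_neg hu, Complex.real_smul]
      ring
    · -- u = 0
      subst hu
      have hi : HasDerivAt (fun t : ℝ => l * t) l 0 := by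
        simpa using ((hasDerivAt_id (0:ℝ)).const_mul l)
      have h0 : HasDerivAt (fun t : ℝ => deriv F (l * t)) (l • deriv (deriv F) 0) 0 := by
        have := (hFd1 (l * 0)).hasDerivAt.scomp 0 hi
        simpa [mul_zero, Function.comp_def] using this
      rw [hasDerivAt_iff_isLittleO] at h0
      simp only [mul_zero, sub_zero, hF'0] at h0
      have habs : Filter.Tendsto (fun h : ℝ => |h|) (nhds 0) (nhds 0) := by
        simpa using continuous_abs.tendsto (0 : ℝ)
      have h1 := h0.comp_tendsto habs
      have h2 : (fun h : ℝ => |h|) =O[nhds (0:ℝ)] fun h => h := by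
        apply Asymptotics.isBigO_of_le
        intro z
        simp
      have h3 := h1.trans_isBigO h2
      -- h3 : (fun h => deriv F (l*|h|) - |h| • (l • F''0)) =o[𝓝 0] fun h => h
      have hbd : (fun h : ℝ => (l : ℂ) * (Real.sign h : ℂ)) =O[nhds (0:ℝ)]
          (fun _ : ℝ => (1 : ℝ)) := by
        rw [Asymptotics.isBigO_iff]
        refine ⟨l, Filter.Eventually.of_forall fun z => ?_⟩
        rcases Real.sign_apply_eq z with h | h | h <;>
          simp [h, abs_of_pos hl, hl.le]
      have h4 := hbd.mul_isLittleO h3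
      rw [hasDerivAt_iff_isLittleO]
      have key : (fun h : ℝ => G1 h - G1 0 - (h - 0) • G2 0)
          = fun h : ℝ => ((l : ℂ) * (Real.sign h : ℂ)) *
              ((fun t : ℝ => deriv F (l * t) - t • (l • deriv (deriv F) 0)) ∘ fun h : ℝ => |h|) h := by
        funext h
        have hs : ((Real.sign h : ℝ) : ℂ) * ((|h| : ℝ) : ℂ) = (h : ℂ) := by
          exact_mod_cast congrArg (fun t : ℝ => (t : ℂ)) (hsma h)
        simp only [hG1def, hG2def, Function.comp, Real.sign_zero, abs_zero, mul_zero,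
          Complex.ofReal_zero, zero_mul, sub_zero, Complex.real_smul]
        linear_combination ((l:ℂ)^2 * deriv (deriv F) 0) * hs
      rw [key]
      simpa using h4
    · have hi : HasDerivAt (fun v : ℝ => l * v) l u := by
        simpa using ((hasDerivAt_id u).const_mul l)
      have h1 : HasDerivAt (fun v : ℝ => deriv F (l * v)) (l • deriv (deriv F) (l * u)) u :=
        (hFd1 (l * u)).hasDerivAt.scomp u hi
      have h1' := h1.const_mul ((l:ℂ))
      have heq : G1 =ᶠ[nhds u] fun v : ℝ => (l:ℂ) * deriv F (l * v) := by
        filter_upwards [Ioi_mem_nhds hu] with v hv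
        have hv' : (0:ℝ) < v := hv
        simp only [hG1def]
        rw [Real.sign_of_pos hv', abs_of_pos hv']
        push_cast
        ring_nf
      have h2 := h1'.congr_of_eventuallyEq heq
      refine HasDerivAt.congr_deriv h2 (Eq.symm ?_)
      simp [hG2def, abs_of_pos hu, Complex.real_smul]
      ring
  have hG1c : Continuous G1 := continuous_iff_continuousAt.mpr fun u => (hB u).continuousAt
  have hG2c : Continuous G2 :=
    continuous_const.mul (hFd2c.comp (continuous_const.mul continuous_abs))
  -- now set up g
  set g : ℝ → ℂ := fun θ => G (x - θ * y) with hgdef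
  set g1 : ℝ → ℂ := fun θ => -(y : ℂ) * G1 (x - θ * y) with hg1def
  set g2 : ℝ → ℂ := fun θ => (y : ℂ) ^ 2 * G2 (x - θ * y) with hg2def
  have hinner : ∀ θ : ℝ, HasDerivAt (fun t : ℝ => x - t * y) (-y) θ := by
    intro θ
    simpa using ((hasDerivAt_id θ).mul_const y).const_sub x
  have hg : ∀ θ : ℝ, HasDerivAt g (g1 θ) θ := by
    intro θ
    have := (hA (x - θ * y)).scomp θ (hinner θ)
    simpa [hgdef, hg1def, Complex.real_smul, Function.comp_def] using this
  have hg1 : ∀ θ : ℝ, HasDerivAt g1 (g2 θ) θ := by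
    intro θ
    have := ((hB (x - θ * y)).scomp θ (hinner θ)).const_mul (-(y:ℂ))
    refine HasDerivAt.congr_deriv this (Eq.symm ?_)
    simp [hg2def, Complex.real_smul]
    ring
  have hg1c : Continuous g1 := continuous_iff_continuousAt.mpr fun θ => (hg1 θ).continuousAt
  have hg2c : Continuous g2 :=
    continuous_const.mul (hG2c.comp (continuous_const.sub (continuous_id.mul continuous_const)))
  -- first integral identity
  have key1 : ∫ θ in (0:ℝ)..1, g1 θ = g 1 - g 0 :=
    intervalIntegral.integral_eq_sub_of_hasDerivAt (fun θ _ => hg θ)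
      (hg1c.intervalIntegrable 0 1)
  -- second: integrate (1-θ) * g1
  set H : ℝ → ℂ := fun θ => (1 - (θ : ℂ)) * g1 θ with hHdef
  have hH : ∀ θ : ℝ, HasDerivAt H (-(g1 θ) + (1 - (θ : ℂ)) * g2 θ) θ := by
    intro θ
    have hc : HasDerivAt (fun t : ℝ => (1 : ℂ) - (t : ℂ)) (-1) θ := by
      simpa using (Complex.ofRealCLM.hasDerivAt (x := θ)).const_sub (1 : ℂ)
    have := hc.mul (hg1 θ)
    refine HasDerivAt.congr_deriv this (Eq.symm ?_)
    ring
  have hHc : Continuous (fun θ : ℝ => -(g1 θ) + (1 - (θ : ℂ)) * g2 θ) := by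
    exact hg1c.neg.add ((continuous_const.sub Complex.continuous_ofReal).mul hg2c)
  have key2 : ∫ θ in (0:ℝ)..1, (-(g1 θ) + (1 - (θ : ℂ)) * g2 θ) = H 1 - H 0 :=
    intervalIntegral.integral_eq_sub_of_hasDerivAt (fun θ _ => hH θ)
      (hHc.intervalIntegrable 0 1)
  have hsplit : ∫ θ in (0:ℝ)..1, (-(g1 θ) + (1 - (θ : ℂ)) * g2 θ)
      = (∫ θ in (0:ℝ)..1, -(g1 θ)) + ∫ θ in (0:ℝ)..1, (1 - (θ : ℂ)) * g2 θ :=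
    intervalIntegral.integral_add (hg1c.neg.intervalIntegrable 0 1)
      (((continuous_const.sub Complex.continuous_ofReal).mul hg2c).intervalIntegrable 0 1)
  have hneg : ∫ θ in (0:ℝ)..1, -(g1 θ) = -∫ θ in (0:ℝ)..1, g1 θ :=
    intervalIntegral.integral_neg
  have hH1 : H 1 = 0 := by simp [hHdef]
  have hH0 : H 0 = g1 0 := by simp [hHdef]
  have main : g 1 = g 0 + g1 0 + ∫ θ in (0:ℝ)..1, (1 - (θ : ℂ)) * g2 θ := by
    rw [hsplit, hneg, key1, hH1, hH0] at key2
    linear_combination -key2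
  -- rewrite the integral
  have hint : ∫ θ in (0:ℝ)..1, (1 - (θ : ℂ)) * g2 θ
      = (l : ℂ) ^ 2 * (y : ℂ) ^ 2 *
        ∫ θ in (0:ℝ)..1, ((1 - θ : ℝ) : ℂ) * deriv (deriv F) (l * |x - θ * y|) := by
    rw [← intervalIntegral.integral_const_mul]
    apply intervalIntegral.integral_congr
    intro θ _
    simp only [hg2def, hG2def]
    push_cast
    ring
  have e1 : g 1 = F (l * |x - y|) := by simp [hgdef, hG]
  have e0 : g 0 = F (l * |x|) := by simp [hgdef, hG]
  have e10 : g1 0 = -((l : ℂ) * (y : ℂ) * (Real.sign x : ℂ) * deriv F (l * |x|)) := by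
    simp [hg1def, hG1def]
    ring
  rw [e1, e0, e10, hint] at main
  linear_combination main
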